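/- Let α be a confluent continuous partial action with dom(g) closed (open) in X for every generator g ∈ G. Then dom(u) is closed (open) in X for every u ∈ M. Moreover if additionally each g: dom(g) → X is a closed (open) map, then each u: dom(u) → X is closed (open). -/
import Mathlib


/-- One-step reduction on words over `G` induced by the rules `R` of a monoid
presentation `⟨G|R⟩`. -/
def MStep {G : Type*} (R : List G → List G → Prop) : List G → List G → Prop :=
  fun w₁ w₂ => ∃ a l r b : List G, R l r ∧ w₁ = a ++ l ++ b ∧ w₂ = a ++ r ++ b

/-- One-step reduction on `G* × X` for a confluent partial action: either
rewrite the word via `R`, or let the last (rightmost, acting first) generator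
act on the point. -/
def PStep {G X : Type*} (R : List G → List G → Prop) (act : G → X → Option X) :
    List G × X → List G × X → Prop := fun p q =>
  (MStep R p.1 q.1 ∧ p.2 = q.2) ∨
  (∃ (w : List G) (g : G) (y : X),
    p.1 = w ++ [g] ∧ act g p.2 = some y ∧ q.1 = w ∧ q.2 = y)

/-- The globalization `Y` of a confluent partial action: the quotient of
`G* × X` by the equivalence generated by the one-step reduction `PStep`. -/
def PGlob {G X : Type*} (R : List G → List G → Prop) (act : G → X → Option X) : Type _ :=
  Quot (Relation.EqvGen (PStep R act))

/-- The class of `(w, x)` in the globalization. -/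
def PGlob.mk {G X : Type*} (R : List G → List G → Prop) (act : G → X → Option X)
    (p : List G × X) : PGlob R act :=
  Quot.mk _ p

/-- The topological globalization: the final topology with respect to all the
maps `x ↦ [w, x]`, `w` a word over `G`. -/
instance {G X : Type*} (R : List G → List G → Prop) (act : G → X → Option X)
    [t : TopologicalSpace X] : TopologicalSpace (PGlob R act) :=
  ⨆ w : List G, TopologicalSpace.coinduced (fun x : X => PGlob.mk R act (w, x)) t

namespace Stmt14Aux

open Relation

variable {G X : Type*}

theorem no_empty_rule {R : List G → List G → Prop}
    (hnoeth : WellFounded (fun w₁ w₂ : List G => MStep R w₂ w₁)) :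
    ∀ r, ¬ R [] r := by
  intro r hr
  have H : ∀ w : List G, Acc (fun w₁ w₂ : List G => MStep R w₂ w₁) w → False := by
    intro w hacc
    induction hacc with
    | intro w _ ih =>
      exact ih (w ++ r) ⟨w, [], r, [], hr, by simp, by simp⟩
  exact H [] (hnoeth.apply [])

theorem no_step_from_empty {R : List G → List G → Prop} {act : G → X → Option X}
    (hR : ∀ r, ¬ R [] r) {y : X} {q : List G × X} (h : PStep R act ([], y) q) : False := by
  rcases h with ⟨⟨a, l, r, b, hlr, h1, _⟩, _⟩ | ⟨w, g, z, h1, _, _, _⟩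
  · have h1' : ([] : List G) = a ++ l ++ b := h1
    have : l = [] := by
      rcases List.append_eq_nil_iff.1 (List.append_eq_nil_iff.1 h1'.symm).1 with ⟨_, h⟩
      exact h
    exact hR r (this ▸ hlr)
  · simpa using congrArg List.length h1

theorem rtg_from_empty {R : List G → List G → Prop} {act : G → X → Option X}
    (hR : ∀ r, ¬ R [] r) {y : X} {t : List G × X}
    (h : Relation.ReflTransGen (PStep R act) ([], y) t) : t = ([], y) := by
  rcases Relation.ReflTransGen.cases_head h with heq | ⟨q, hq, _⟩
  · exact heq.symm
  · exact absurd hq fun hq => no_step_from_empty hR hq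

theorem mstep_iff {R : List G → List G → Prop} {act : G → X → Option X}
    (hR : ∀ r, ¬ R [] r)
    (hconfP : ∀ p q₁ q₂ : List G × X, Relation.ReflTransGen (PStep R act) p q₁ →
      Relation.ReflTransGen (PStep R act) p q₂ →
      ∃ t, Relation.ReflTransGen (PStep R act) q₁ t ∧
        Relation.ReflTransGen (PStep R act) q₂ t)
    {w w' : List G} (h : MStep R w w') (x y : X) :
    Relation.ReflTransGen (PStep R act) (w, x) ([], y) ↔
    Relation.ReflTransGen (PStep R act) (w', x) ([], y) := by
  constructor
  · intro hw
    have hstep : Relation.ReflTransGen (PStep R act) (w, x) (w', x) :=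
      Relation.ReflTransGen.single (Or.inl ⟨h, rfl⟩)
    obtain ⟨t, ht1, ht2⟩ := hconfP (w, x) ([], y) (w', x) hw hstep
    rwa [rtg_from_empty hR ht1] at ht2
  · intro hw'
    exact Relation.ReflTransGen.head (b := (w', x)) (Or.inl ⟨h, rfl⟩) hw'

theorem mrtg_iff {R : List G → List G → Prop} {act : G → X → Option X}
    (hR : ∀ r, ¬ R [] r)
    (hconfP : ∀ p q₁ q₂ : List G × X, Relation.ReflTransGen (PStep R act) p q₁ →
      Relation.ReflTransGen (PStep R act) p q₂ →
      ∃ t, Relation.ReflTransGen (PStep R act) q₁ t ∧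
        Relation.ReflTransGen (PStep R act) q₂ t)
    {w w' : List G} (h : Relation.ReflTransGen (MStep R) w w') (x y : X) :
    Relation.ReflTransGen (PStep R act) (w, x) ([], y) ↔
    Relation.ReflTransGen (PStep R act) (w', x) ([], y) := by
  induction h with
  | refl => exact Iff.rfl
  | tail _ hstep ih => exact ih.trans (mstep_iff hR hconfP hstep x y)

theorem exists_nf {R : List G → List G → Prop}
    (hnoeth : WellFounded (fun w₁ w₂ : List G => MStep R w₂ w₁)) (w : List G) :
    ∃ v, Relation.ReflTransGen (MStep R) w v ∧ ∀ u, ¬ MStep R v u := by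
  induction w using hnoeth.induction with
  | _ w ih =>
    by_cases h : ∃ u, MStep R w u
    · obtain ⟨u, hu⟩ := h
      obtain ⟨v, hv1, hv2⟩ := ih u hu
      exact ⟨v, Relation.ReflTransGen.head hu hv1, hv2⟩
    · exact ⟨w, Relation.ReflTransGen.refl, fun u hu => h ⟨u, hu⟩⟩

theorem nf_prefix {R : List G → List G → Prop} {v' : List G} {g : G}
    (hnf : ∀ u, ¬ MStep R (v' ++ [g]) u) : ∀ u, ¬ MStep R v' u := by
  rintro u ⟨a, l, r, b, hlr, rfl, rfl⟩
  exact hnf (a ++ r ++ (b ++ [g])) ⟨a, l, r, b ++ [g], hlr, by simp, by simp⟩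

theorem step_concat {R : List G → List G → Prop} {act : G → X → Option X}
    {v' : List G} {g : G} (hnf : ∀ u, ¬ MStep R (v' ++ [g]) u) (x y : X) :
    Relation.ReflTransGen (PStep R act) (v' ++ [g], x) ([], y) ↔
    ∃ z, act g x = some z ∧ Relation.ReflTransGen (PStep R act) (v', z) ([], y) := by
  constructor
  · intro h
    rcases Relation.ReflTransGen.cases_head h with heq | ⟨q, hq, hrest⟩
    · exfalso
      have := congrArg (fun p : List G × X => p.1.length) heq
      simpa using this
    · rcases hq with ⟨hm, _⟩ | ⟨w, g', z, h1, h2, h3, h4⟩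
      · exact absurd hm (hnf _)
      · obtain ⟨q1, q2⟩ := q
        have h1' : v' ++ [g] = w ++ [g'] := h1
        obtain ⟨rfl, hg⟩ := List.append_inj' h1' rfl
        have hg' : g = g' := by simpa using hg
        subst hg'
        simp only at h3 h4
        subst h3; subst h4
        exact ⟨_, h2, hrest⟩
  · rintro ⟨z, hz, hrest⟩
    exact Relation.ReflTransGen.head (Or.inr ⟨v', g, z, rfl, hz, rfl, rfl⟩) hrest

/-- Abstract domain lemma: for any predicate `P` on sets closed under the
relevant operations, `P` holds for `dom w`. -/
theorem dom_pred {R : List G → List G → Prop} {act : G → X → Option X}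
    (hnoeth : WellFounded (fun w₁ w₂ : List G => MStep R w₂ w₁))
    (hconfP : ∀ p q₁ q₂ : List G × X, Relation.ReflTransGen (PStep R act) p q₁ →
      Relation.ReflTransGen (PStep R act) p q₂ →
      ∃ t, Relation.ReflTransGen (PStep R act) q₁ t ∧
        Relation.ReflTransGen (PStep R act) q₂ t)
    (P : Set X → Prop) (huniv : P Set.univ)
    (hind : ∀ (g : G) (t : Set X), P t →
      P ({x | (act g x).isSome} ∩ (fun x => (act g x).getD x) ⁻¹' t))
    (w : List G) :
    P {x : X | ∃ y, Relation.ReflTransGen (PStep R act) (w, x) ([], y)} := by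
  have hR := no_empty_rule hnoeth
  obtain ⟨v, hwv, hvnf⟩ := exists_nf hnoeth w
  have heq : {x : X | ∃ y, Relation.ReflTransGen (PStep R act) (w, x) ([], y)} =
      {x : X | ∃ y, Relation.ReflTransGen (PStep R act) (v, x) ([], y)} := by
    ext x
    exact exists_congr fun y => mrtg_iff hR hconfP hwv x y
  rw [heq]
  clear heq hwv w
  induction v using List.reverseRecOn with
  | nil =>
    have : {x : X | ∃ y, Relation.ReflTransGen (PStep R act) (([] : List G), x) ([], y)} =
        Set.univ := by
      ext x
      simp only [Set.mem_setOf_eq, Set.mem_univ, iff_true]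
      exact ⟨x, Relation.ReflTransGen.refl⟩
    rw [this]; exact huniv
  | append_singleton v' g ih =>
    have hset : {x : X | ∃ y, Relation.ReflTransGen (PStep R act) (v' ++ [g], x) ([], y)} =
        {x | (act g x).isSome} ∩ (fun x => (act g x).getD x) ⁻¹'
          {x : X | ∃ y, Relation.ReflTransGen (PStep R act) (v', x) ([], y)} := by
      ext x
      simp only [Set.mem_setOf_eq, Set.mem_inter_iff, Set.mem_preimage]
      constructor
      · rintro ⟨y, h⟩
        obtain ⟨z, hz, hr⟩ := (step_concat hvnf x y).1 h
        exact ⟨by simp [hz], by simpa [hz] using ⟨y, hr⟩⟩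
      · rintro ⟨hs, y, hr⟩
        obtain ⟨z, hz⟩ := Option.isSome_iff_exists.1 hs
        exact ⟨y, (step_concat hvnf x y).2 ⟨z, hz, by simpa [hz] using hr⟩⟩
    rw [hset]
    exact hind g _ (ih (nf_prefix hvnf))

/-- Abstract image lemma. -/
theorem img_pred {R : List G → List G → Prop} {act : G → X → Option X}
    (hnoeth : WellFounded (fun w₁ w₂ : List G => MStep R w₂ w₁))
    (hconfP : ∀ p q₁ q₂ : List G × X, Relation.ReflTransGen (PStep R act) p q₁ →
      Relation.ReflTransGen (PStep R act) p q₂ →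
      ∃ t, Relation.ReflTransGen (PStep R act) q₁ t ∧
        Relation.ReflTransGen (PStep R act) q₂ t)
    (P : Set X → Prop)
    (hind : ∀ (g : G) (C : Set X), P C → P {y : X | ∃ x ∈ C, act g x = some y})
    (w : List G) (C : Set X) (hC : P C) :
    P {y : X | ∃ x ∈ C, Relation.ReflTransGen (PStep R act) (w, x) ([], y)} := by
  have hR := no_empty_rule hnoeth
  obtain ⟨v, hwv, hvnf⟩ := exists_nf hnoeth w
  have heq : {y : X | ∃ x ∈ C, Relation.ReflTransGen (PStep R act) (w, x) ([], y)} =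
      {y : X | ∃ x ∈ C, Relation.ReflTransGen (PStep R act) (v, x) ([], y)} := by
    ext y
    exact exists_congr fun x => and_congr_right fun _ => mrtg_iff hR hconfP hwv x y
  rw [heq]
  clear heq hwv w
  induction v using List.reverseRecOn generalizing C with
  | nil =>
    have : {y : X | ∃ x ∈ C, Relation.ReflTransGen (PStep R act) (([] : List G), x) ([], y)} =
        C := by
      ext y
      simp only [Set.mem_setOf_eq]
      constructor
      · rintro ⟨x, hx, h⟩
        have := rtg_from_empty hR h
        have hyx : y = x := congrArg Prod.snd this
        exact hyx ▸ hx
      · intro hy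
        exact ⟨y, hy, Relation.ReflTransGen.refl⟩
    rw [this]; exact hC
  | append_singleton v' g ih =>
    have hset : {y : X | ∃ x ∈ C, Relation.ReflTransGen (PStep R act) (v' ++ [g], x) ([], y)} =
        {y : X | ∃ z ∈ {z : X | ∃ x ∈ C, act g x = some z},
          Relation.ReflTransGen (PStep R act) (v', z) ([], y)} := by
      ext y
      simp only [Set.mem_setOf_eq]
      constructor
      · rintro ⟨x, hx, h⟩
        obtain ⟨z, hz, hr⟩ := (step_concat hvnf x y).1 h
        exact ⟨z, ⟨x, hx, hz⟩, hr⟩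
      · rintro ⟨z, ⟨x, hx, hz⟩, hr⟩
        exact ⟨x, hx, (step_concat hvnf x y).2 ⟨z, hz, hr⟩⟩
    rw [hset]
    exact ih _ (hind g C hC) (nf_prefix hvnf)

end Stmt14Aux

/-- For a confluent continuous partial action: if `dom(g)` is closed (resp.
open) for every generator `g`, then `dom(u)` is closed (resp. open) for every
`u ∈ M` (represented by a word `w`; `dom(u) = {x | u·x is defined}`); if
moreover each `g` is a closed (resp. open) map on its domain, then so is each
`u` (images of traces of closed/open sets on the domain are closed/open). -/
theorem stmt_14 {G X : Type*} [TopologicalSpace X]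
    (R : List G → List G → Prop) (act : G → X → Option X)
    (hnoeth : WellFounded (fun w₁ w₂ : List G => MStep R w₂ w₁))
    (hconfM : ∀ w s₁ s₂ : List G, Relation.ReflTransGen (MStep R) w s₁ →
      Relation.ReflTransGen (MStep R) w s₂ →
      ∃ t, Relation.ReflTransGen (MStep R) s₁ t ∧ Relation.ReflTransGen (MStep R) s₂ t)
    (hnosingle : ∀ (g : G) (r : List G), ¬ R [g] r)
    (hconfP : ∀ p q₁ q₂ : List G × X, Relation.ReflTransGen (PStep R act) p q₁ →
      Relation.ReflTransGen (PStep R act) p q₂ →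
      ∃ t, Relation.ReflTransGen (PStep R act) q₁ t ∧
        Relation.ReflTransGen (PStep R act) q₂ t)
    (hcont : ∀ g : G, ContinuousOn (fun x => (act g x).getD x) {x | (act g x).isSome}) :
    ((∀ g : G, IsClosed {x | (act g x).isSome}) →
      ∀ w : List G,
        IsClosed {x : X | ∃ y, Relation.ReflTransGen (PStep R act) (w, x) ([], y)}) ∧
    ((∀ g : G, IsOpen {x | (act g x).isSome}) →
      ∀ w : List G,
        IsOpen {x : X | ∃ y, Relation.ReflTransGen (PStep R act) (w, x) ([], y)}) ∧
    (((∀ g : G, IsClosed {x | (act g x).isSome}) ∧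
      (∀ (g : G) (C : Set X), IsClosed C →
        IsClosed {y : X | ∃ x ∈ C, act g x = some y})) →
      ∀ (w : List G) (C : Set X), IsClosed C →
        IsClosed {y : X | ∃ x ∈ C, Relation.ReflTransGen (PStep R act) (w, x) ([], y)}) ∧
    (((∀ g : G, IsOpen {x | (act g x).isSome}) ∧
      (∀ (g : G) (C : Set X), IsOpen C →
        IsOpen {y : X | ∃ x ∈ C, act g x = some y})) →
      ∀ (w : List G) (C : Set X), IsOpen C →
        IsOpen {y : X | ∃ x ∈ C, Relation.ReflTransGen (PStep R act) (w, x) ([], y)}) := by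
    classical
  refine ⟨?_, ?_, ?_, ?_⟩
  · intro hcl w
    exact Stmt14Aux.dom_pred hnoeth hconfP IsClosed isClosed_univ
      (fun g t ht => (hcont g).preimage_isClosed_of_isClosed (hcl g) ht) w
  · intro hop w
    exact Stmt14Aux.dom_pred hnoeth hconfP IsOpen isOpen_univ
      (fun g t ht => (hcont g).isOpen_inter_preimage (hop g) ht) w
  · rintro ⟨_, himg⟩ w C hC
    exact Stmt14Aux.img_pred hnoeth hconfP IsClosed himg w C hC
  · rintro ⟨_, himg⟩ w C hC
    exact Stmt14Aux.img_pred hnoeth hconfP IsOpen himg w C hC
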